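/- The t-product is associative: for tensors X ∈ ℂ^{n1×n2×n3}, Y ∈ ℂ^{n2×n4×n3}, Z ∈ ℂ^{n4×n5×n3}, one has (X * Y) * Z = X * (Y * Z). -/

import Mathlib

open Complex Matrix BigOperators Kronecker

noncomputable section

/-- DFT along the third mode, applied slice-wise. -/
def dft {n1 n2 n3 : ℕ} (X : Fin n3 → Matrix (Fin n1) (Fin n2) ℂ) :
    Fin n3 → Matrix (Fin n1) (Fin n2) ℂ :=
  fun k => ∑ j : Fin n3,
    Complex.exp (-2 * (Real.pi : ℂ) * Complex.I * ((k : ℕ) : ℂ) * ((j : ℕ) : ℂ) / (n3 : ℂ)) • X j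

/-- Block circulant matrix of a third-order tensor. -/
def bcirc {n1 n2 n3 : ℕ} (X : Fin n3 → Matrix (Fin n1) (Fin n2) ℂ) :
    Matrix (Fin n3 × Fin n1) (Fin n3 × Fin n2) ℂ :=
  Matrix.of fun p q => X (p.1 - q.1) p.2 q.2

/-- Vertical stacking of the frontal slices. -/
def bvec {n2 n4 n3 : ℕ} (Y : Fin n3 → Matrix (Fin n2) (Fin n4) ℂ) :
    Matrix (Fin n3 × Fin n2) (Fin n4) ℂ :=
  Matrix.of fun p c => Y p.1 p.2 c

/-- t-product of third-order tensors, defined via bvfold(bcirc(X)·bvec(Y)). -/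
def tMul {n1 n2 n4 n3 : ℕ} (X : Fin n3 → Matrix (Fin n1) (Fin n2) ℂ)
    (Y : Fin n3 → Matrix (Fin n2) (Fin n4) ℂ) :
    Fin n3 → Matrix (Fin n1) (Fin n4) ℂ :=
  fun k => Matrix.of fun a c => (bcirc X * bvec Y) (k, a) c

/-- Tensor conjugate transpose: conjugate-transpose each frontal slice and
reverse the order of slices 2 through n3. -/
def tH {n1 n2 n3 : ℕ} (X : Fin n3 → Matrix (Fin n1) (Fin n2) ℂ) :
    Fin n3 → Matrix (Fin n2) (Fin n1) ℂ :=
  fun k => (X (-k))ᴴ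

/-- Identity tensor: first frontal slice the identity matrix, others zero. -/
def tId (n1 n3 : ℕ) : Fin n3 → Matrix (Fin n1) (Fin n1) ℂ :=
  fun k => if (k : ℕ) = 0 then 1 else 0

/-- Frobenius norm of a third-order tensor. -/
def fro {n1 n2 n3 : ℕ} (X : Fin n3 → Matrix (Fin n1) (Fin n2) ℂ) : ℝ :=
  Real.sqrt (∑ k, ∑ i, ∑ j, ‖X k i j‖ ^ 2)

/-- Squared Frobenius norm of a matrix. -/
def mFrobSq {m n : ℕ} (A : Matrix (Fin m) (Fin n) ℂ) : ℝ :=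
  ∑ i, ∑ j, ‖A i j‖ ^ 2

/-- Tubal rank: maximal rank of the Fourier-domain frontal slices. -/
def tubalRank {n1 n2 n3 : ℕ} (X : Fin n3 → Matrix (Fin n1) (Fin n2) ℂ) : ℕ :=
  Finset.univ.sup fun k => (dft X k).rank

/-- Mode-1 matricization. -/
def mode1 {n1 n2 n3 : ℕ} (X : Fin n3 → Matrix (Fin n1) (Fin n2) ℂ) :
    Matrix (Fin n1) (Fin n2 × Fin n3) ℂ :=
  Matrix.of fun i p => X p.2 i p.1

/-- Mode-2 matricization. -/
def mode2 {n1 n2 n3 : ℕ} (X : Fin n3 → Matrix (Fin n1) (Fin n2) ℂ) :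
    Matrix (Fin n2) (Fin n1 × Fin n3) ℂ :=
  Matrix.of fun j p => X p.2 p.1 j

/-- The n×n discrete Fourier matrix. -/
def dftMatrix (n : ℕ) : Matrix (Fin n) (Fin n) ℂ :=
  Matrix.of fun j k =>
    Complex.exp (-2 * (Real.pi : ℂ) * Complex.I * ((j : ℕ) : ℂ) * ((k : ℕ) : ℂ) / (n : ℂ))

theorem tMul_eq_sum {m p q n3 : ℕ} (A : Fin n3 → Matrix (Fin m) (Fin p) ℂ)
    (B : Fin n3 → Matrix (Fin p) (Fin q) ℂ) (k : Fin n3) :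
    tMul A B k = ∑ j : Fin n3, A (k - j) * B j := by
  ext a c
  simp only [tMul, bcirc, bvec, Matrix.mul_apply, Matrix.of_apply,
    Matrix.sum_apply, Fintype.sum_prod_type]

theorem tprod_assoc {n1 n2 n4 n5 n3 : ℕ} (X : Fin n3 → Matrix (Fin n1) (Fin n2) ℂ)
    (Y : Fin n3 → Matrix (Fin n2) (Fin n4) ℂ) (Z : Fin n3 → Matrix (Fin n4) (Fin n5) ℂ) :
    tMul (tMul X Y) Z = tMul X (tMul Y Z) := by
  rcases n3 with _ | m
  · funext k; exact k.elim0
  funext k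
  simp only [tMul_eq_sum]
  simp only [Matrix.sum_mul, Matrix.mul_sum, Matrix.mul_assoc]
  nth_rewrite 2 [show ∀ (f : Fin (m+1) → Fin (m+1) → Matrix (Fin n1) (Fin n5) ℂ),
      ∑ x, ∑ a, f x a = ∑ a, ∑ x, f x a
    from fun f => Finset.sum_comm]
  refine Finset.sum_congr rfl fun x _ => ?_
  refine Fintype.sum_equiv (Equiv.addLeft x) _ _ fun j => ?_
  simp only [Equiv.coe_addLeft, sub_add_eq_sub_sub, add_sub_cancel_left]
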